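/- The function J″ is well defined (i.e. the defining integral converges) and bounded on [0, +∞) if and only if the support of ν is contained in [0, +∞) and ∫_{[1,∞)} y² ν(dy) < ∞. -/

import Mathlib

open MeasureTheory

/-- The topological support of a measure on `ℝ`: the set of points all of whose
open neighborhoods have positive measure. -/
def measureSupport (ν : Measure ℝ) : Set ℝ :=
  {x : ℝ | ∀ U : Set ℝ, IsOpen U → x ∈ U → ν U ≠ 0}

/-- The second derivative of the Laplace exponent:
`J″(z) = q + ∫ y² e^{−zy} ν(dy)`. -/
noncomputable def Jsecond (ν : Measure ℝ) (q : ℝ) (z : ℝ) : ℝ :=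
  q + ∫ y, y ^ 2 * Real.exp (-(z * y)) ∂ν

/-- `J″` is well defined and bounded on `[0,∞)` iff `supp ν ⊆ [0,∞)` and
`∫_{[1,∞)} y² ν(dy) < ∞`. -/
theorem jsecond_bounded_iff (ν : Measure ℝ) (q : ℝ) (hq : 0 ≤ q)
    (hν : ∫⁻ y, ENNReal.ofReal (min (y ^ 2) 1) ∂ν < ⊤) :
    ((∀ z : ℝ, 0 ≤ z → Integrable (fun y => y ^ 2 * Real.exp (-(z * y))) ν) ∧
      ∃ C : ℝ, ∀ z : ℝ, 0 ≤ z → |Jsecond ν q z| ≤ C) ↔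
    (measureSupport ν ⊆ Set.Ici 0 ∧ IntegrableOn (fun y => y ^ 2) (Set.Ici 1) ν) := by
  constructor
  · rintro ⟨hint, C, hC⟩
    constructor
    · -- support ⊆ [0, ∞)
      intro x hx
      by_contra hx0
      simp only [Set.mem_Ici, not_le] at hx0
      set U : Set ℝ := Set.Ioo (2 * x) (x / 2) with hU
      have hxU : x ∈ U := ⟨by linarith, by linarith⟩
      have hνU : ν U ≠ 0 := hx U isOpen_Ioo hxU
      have hxne : x ≠ 0 := ne_of_lt hx0
      have hsq : ∀ y ∈ U, x ^ 2 / 4 ≤ y ^ 2 := by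
        rintro y ⟨-, hy2⟩
        nlinarith
      have hm : (0 : ℝ) < min (x ^ 2 / 4) 1 := lt_min (by positivity) one_pos
      have hfin : ν U ≠ ⊤ := by
        intro htop
        have hle : ENNReal.ofReal (min (x ^ 2 / 4) 1) * ν U
            ≤ ∫⁻ y, ENNReal.ofReal (min (y ^ 2) 1) ∂ν := by
          rw [← MeasureTheory.setLIntegral_const U _]
          refine le_trans (setLIntegral_mono (by fun_prop) fun y hy => ?_)
            (setLIntegral_le_lintegral _ _)
          exact ENNReal.ofReal_le_ofReal (min_le_min (hsq y hy) le_rfl)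
        rw [htop, ENNReal.mul_top (ENNReal.ofReal_pos.2 hm).ne'] at hle
        exact absurd (top_le_iff.mp hle ▸ hν) (by simp)
      set c := (ν U).toReal with hc
      have hcpos : 0 < c := ENNReal.toReal_pos hνU hfin
      set a := x ^ 2 / 4 * c with ha
      have hapos : 0 < a := by positivity
      set K := |C| / a + 1 with hK
      have hKpos : 0 < K := by positivity
      set z := 2 * K / (-x) with hz
      have hxneg : (0 : ℝ) < -x := by linarith
      have hzpos : 0 ≤ z := by positivity
      have hzK : z * (-x) / 2 = K := by
        rw [hz]; field_simp
      have hpb : ∀ y ∈ U, x ^ 2 / 4 * Real.exp K ≤ y ^ 2 * Real.exp (-(z * y)) := by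
        rintro y ⟨hy1, hy2⟩
        have hexple : Real.exp K ≤ Real.exp (-(z * y)) := by
          apply Real.exp_le_exp.2
          rw [← hzK]
          nlinarith [mul_nonneg hzpos (by linarith : (0:ℝ) ≤ x / 2 - y)]
        exact mul_le_mul (hsq y ⟨hy1, hy2⟩) hexple (Real.exp_pos K).le (sq_nonneg y)
      have h1 : x ^ 2 / 4 * Real.exp K * c
          ≤ ∫ y in U, y ^ 2 * Real.exp (-(z * y)) ∂ν :=
        setIntegral_ge_of_const_le_real measurableSet_Ioo hfin hpb
          ((hint z hzpos).integrableOn)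
      have h2 : ∫ y in U, y ^ 2 * Real.exp (-(z * y)) ∂ν
          ≤ ∫ y, y ^ 2 * Real.exp (-(z * y)) ∂ν :=
        setIntegral_le_integral (hint z hzpos)
          (Filter.Eventually.of_forall fun y => by positivity)
      have h3 := hC z hzpos
      have hJnn : 0 ≤ Jsecond ν q z :=
        add_nonneg hq (integral_nonneg fun y => by positivity)
      rw [abs_of_nonneg hJnn] at h3
      have h4 : x ^ 2 / 4 * Real.exp K * c ≤ C := by
        have h3' : q + ∫ y, y ^ 2 * Real.exp (-(z * y)) ∂ν ≤ C := h3
        linarith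
      have haK : a * K = |C| + a := by
        rw [hK]; field_simp
      have h5 : a * (K + 1) ≤ a * Real.exp K :=
        mul_le_mul_of_nonneg_left (Real.add_one_le_exp K) hapos.le
      have h6 : x ^ 2 / 4 * Real.exp K * c = a * Real.exp K := by rw [ha]; ring
      nlinarith [le_abs_self C]
    · have h0 := hint 0 le_rfl
      simpa using h0.integrableOn (s := Set.Ici 1)
  · rintro ⟨hsupp, hI⟩
    -- ν vanishes on (-∞, 0)
    have hnull : ν (Set.Iio 0) = 0 := by
      apply measure_null_of_locally_null
      intro x hx
      have hns : x ∉ measureSupport ν := fun h => absurd (Set.mem_Ici.mp (hsupp h)) (not_le.2 (Set.mem_Iio.mp hx))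
      simp only [measureSupport, Set.mem_setOf_eq, not_forall] at hns
      obtain ⟨V, hVopen, hxV, hV0⟩ := hns
      push_neg at hV0
      exact ⟨V, mem_nhdsWithin_of_mem_nhds (hVopen.mem_nhds hxV), hV0⟩
    have hae : ∀ᵐ y ∂ν, 0 ≤ y := by
      rw [MeasureTheory.ae_iff]
      convert hnull using 2
      ext y; simp
    -- y ↦ y² is integrable w.r.t. ν
    have hsmall : IntegrableOn (fun y => y ^ 2) (Set.Icc (-1 : ℝ) 1) ν := by
      constructor
      · exact (continuous_pow 2).aestronglyMeasurable
      · rw [hasFiniteIntegral_iff_norm]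
        calc ∫⁻ y in Set.Icc (-1 : ℝ) 1, ENNReal.ofReal ‖y ^ 2‖ ∂ν
            ≤ ∫⁻ y, ENNReal.ofReal (min (y ^ 2) 1) ∂ν := by
              refine le_trans (setLIntegral_mono (by fun_prop) fun y hy => ?_)
                (setLIntegral_le_lintegral _ _)
              apply ENNReal.ofReal_le_ofReal
              rw [Real.norm_eq_abs, abs_of_nonneg (sq_nonneg y)]
              refine le_min le_rfl ?_
              obtain ⟨h1, h2⟩ := hy
              nlinarith
          _ < ⊤ := hν
    have hy2 : Integrable (fun y => y ^ 2) ν := by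
      have hunion : IntegrableOn (fun y => y ^ 2) (Set.Icc (-1 : ℝ) 1 ∪ Set.Ici 1) ν :=
        hsmall.union hI
      have hIci : IntegrableOn (fun y => y ^ 2) (Set.Ici (0 : ℝ)) ν := by
        refine hunion.mono_set fun y hy => ?_
        rcases le_total y 1 with h | h
        · exact Or.inl ⟨le_trans (by norm_num) hy, h⟩
        · exact Or.inr h
      have hres : ν.restrict (Set.Ici (0 : ℝ)) = ν :=
        Measure.restrict_eq_self_of_ae_mem hae
      rwa [IntegrableOn, hres] at hIci
    have hintall : ∀ z : ℝ, 0 ≤ z →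
        Integrable (fun y => y ^ 2 * Real.exp (-(z * y))) ν := by
      intro z hz
      refine hy2.mono' ?_ ?_
      · exact (Continuous.mul (continuous_pow 2)
          ((continuous_const.mul continuous_id).neg.rexp)).aestronglyMeasurable
      · filter_upwards [hae] with y hy
        rw [Real.norm_eq_abs, abs_of_nonneg (by positivity)]
        have : Real.exp (-(z * y)) ≤ 1 := by
          rw [Real.exp_le_one_iff]
          nlinarith
        nlinarith [sq_nonneg y]
    refine ⟨hintall, q + ∫ y, y ^ 2 ∂ν, fun z hz => ?_⟩
    have hJnn : 0 ≤ Jsecond ν q z :=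
      add_nonneg hq (integral_nonneg fun y => by positivity)
    rw [abs_of_nonneg hJnn]
    have hmono : ∫ y, y ^ 2 * Real.exp (-(z * y)) ∂ν ≤ ∫ y, y ^ 2 ∂ν := by
      refine integral_mono_ae (hintall z hz) hy2 ?_
      filter_upwards [hae] with y hy
      have : Real.exp (-(z * y)) ≤ 1 := by
        rw [Real.exp_le_one_iff]
        nlinarith
      nlinarith [sq_nonneg y]
    exact add_le_add_right hmono q
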